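/- (Lemma 2.3) For every τ > 0 and every admissible v, ∫_Z ( −∂_x(x^α ∂_x v) − τ² x^{2−α} v ) · ( 2τ x ∂_x v + τ v ) ds dx = τ(2−α) ∫_Z x^α |∂_x v|² + τ³(2−α) ∫_Z x^{2−α} |v|² + B₀(v), where B₀(v) = −τ ∫_{−S0}^{S0} [ x^{α+1} |∂_x v|² ]_{x=0}^{x=1} ds − τ ∫_{−S0}^{S0} [ x^α v ∂_x v ]_{x=0}^{x=1} ds − τ³ ∫_{−S0}^{S0} [ x^{3−α} |v|² ]_{x=0}^{x=1} ds. -/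

import Mathlib

open MeasureTheory Set Filter
open scoped ENNReal

noncomputable section

/-- The rectangle `Z = (-S0,S0) × (0,1)`, with variables `(s,x)`. -/
def Zset (S0 : ℝ) : Set (ℝ × ℝ) := Ioo (-S0) S0 ×ˢ Ioo (0:ℝ) 1

lemma slice_lemma (α τ : ℝ) (hα0 : 0 < α) (hα2 : α < 2) (hτ : 0 < τ)
    (V Vx P : ℝ → ℝ)
    (hVx : ∀ x ∈ Ioo (0:ℝ) 1, HasDerivAt V (Vx x) x)
    (hP : ∀ x ∈ Ioo (0:ℝ) 1, HasDerivAt (fun y => y ^ α * Vx y) (P x) x)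
    (a0 a1 b0 b1 c0 c1 : ℝ)
    (hA0 : Tendsto (fun x => x ^ (α + 1) * (Vx x) ^ 2) (nhdsWithin 0 (Ioi 0)) (nhds a0))
    (hA1 : Tendsto (fun x => x ^ (α + 1) * (Vx x) ^ 2) (nhdsWithin 1 (Iio 1)) (nhds a1))
    (hB0 : Tendsto (fun x => x ^ α * V x * Vx x) (nhdsWithin 0 (Ioi 0)) (nhds b0))
    (hB1 : Tendsto (fun x => x ^ α * V x * Vx x) (nhdsWithin 1 (Iio 1)) (nhds b1))
    (hC0 : Tendsto (fun x => x ^ (3 - α) * (V x) ^ 2) (nhdsWithin 0 (Ioi 0)) (nhds c0))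
    (hC1 : Tendsto (fun x => x ^ (3 - α) * (V x) ^ 2) (nhdsWithin 1 (Iio 1)) (nhds c1))
    (hiL : IntegrableOn (fun x => (-(P x) - τ ^ 2 * x ^ (2 - α) * V x) *
        (2 * τ * x * Vx x + τ * V x)) (Ioo (0:ℝ) 1))
    (hi1 : IntegrableOn (fun x => x ^ α * (Vx x) ^ 2) (Ioo (0:ℝ) 1))
    (hi2 : IntegrableOn (fun x => x ^ (2 - α) * (V x) ^ 2) (Ioo (0:ℝ) 1)) :
    ∫ x in Ioo (0:ℝ) 1, (-(P x) - τ ^ 2 * x ^ (2 - α) * V x) * (2 * τ * x * Vx x + τ * V x)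
      = τ * (2 - α) * (∫ x in Ioo (0:ℝ) 1, x ^ α * (Vx x) ^ 2)
        + τ ^ 3 * (2 - α) * (∫ x in Ioo (0:ℝ) 1, x ^ (2 - α) * (V x) ^ 2)
        - (τ * (a1 - a0) + τ * (b1 - b0) + τ ^ 3 * (c1 - c0)) := by
  set L : ℝ → ℝ := fun x => (-(P x) - τ ^ 2 * x ^ (2 - α) * V x) *
      (2 * τ * x * Vx x + τ * V x) with hLdef
  set F : ℝ → ℝ := fun y => τ * (y ^ (1 - α) * (y ^ α * Vx y) ^ 2)
      + τ * ((y ^ α * Vx y) * V y) + τ ^ 3 * (y ^ (3 - α) * (V y) ^ 2) with hFdef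
  set G : ℝ → ℝ := fun x => (τ * (2 - α) * (x ^ α * (Vx x) ^ 2)
      + τ ^ 3 * (2 - α) * (x ^ (2 - α) * (V x) ^ 2)) - L x with hGdef
  -- derivative of F is G on (0,1)
  have hderiv : ∀ x ∈ Ioo (0:ℝ) 1, HasDerivAt F (G x) x := by
    intro x hx
    have hx0 : (0:ℝ) < x := hx.1
    have hne : x ≠ 0 := ne_of_gt hx0
    have h1 : HasDerivAt (fun y : ℝ => y ^ (1 - α)) ((1 - α) * x ^ (1 - α - 1)) x :=
      Real.hasDerivAt_rpow_const (Or.inl hne)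
    have h3 : HasDerivAt (fun y : ℝ => y ^ (3 - α)) ((3 - α) * x ^ (3 - α - 1)) x :=
      Real.hasDerivAt_rpow_const (Or.inl hne)
    have hg := hP x hx
    have hv := hVx x hx
    have hD := (((h1.mul (hg.pow 2)).const_mul τ).add ((hg.mul hv).const_mul τ)).add
      (((h3.mul (hv.pow 2))).const_mul (τ ^ 3))
    convert hD using 1
    · rfl
    · rfl
    · rfl
    have e1 : x ^ (1 - α - 1) = (x ^ α)⁻¹ := by
      rw [show (1 - α - 1 : ℝ) = -α by ring, Real.rpow_neg hx0.le]
    have e2 : x ^ (1 - α) = x * (x ^ α)⁻¹ := by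
      rw [show (1 - α : ℝ) = 1 + -α by ring, Real.rpow_add hx0, Real.rpow_one,
        Real.rpow_neg hx0.le]
    have e3 : x ^ (3 - α - 1) = x ^ (2 - α) := by rw [show (3 - α - 1 : ℝ) = 2 - α by ring]
    have e4 : x ^ (3 - α) = x ^ (2 - α) * x := by
      rw [show (3 - α : ℝ) = (2 - α) + 1 by ring, Real.rpow_add hx0, Real.rpow_one]
    have ha : (x : ℝ) ^ α ≠ 0 := (Real.rpow_pos_of_pos hx0 α).ne'
    simp only [hGdef, hLdef, e1, e2, e3, e4]
    field_simp
    simp only [Pi.pow_apply, Nat.cast_ofNat]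
    ring
  -- integrability of G
  have hiG : IntegrableOn G (Ioo (0:ℝ) 1) :=
    ((hi1.const_mul (τ * (2 - α))).add (hi2.const_mul (τ ^ 3 * (2 - α)))).sub hiL
  have hInt : IntervalIntegrable G volume 0 1 :=
    (intervalIntegrable_iff_integrableOn_Ioo_of_le zero_le_one).mpr hiG
  -- limits of F at the endpoints
  have hFeq : ∀ y : ℝ, 0 < y →
      F y = τ * (y ^ (α + 1) * (Vx y) ^ 2) + τ * (y ^ α * V y * Vx y)
        + τ ^ 3 * (y ^ (3 - α) * (V y) ^ 2) := by
    intro y hy0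
    have h2 : y ^ (1 - α) * (y ^ α * Vx y) ^ 2 = y ^ (α + 1) * (Vx y) ^ 2 := by
      rw [mul_pow, ← Real.rpow_natCast (y ^ α) 2, ← Real.rpow_mul hy0.le, ← mul_assoc,
        ← Real.rpow_add hy0]
      push_cast
      ring_nf
    simp only [hFdef, h2]; ring
  have hF0 : Tendsto F (nhdsWithin 0 (Ioi 0)) (nhds (τ * a0 + τ * b0 + τ ^ 3 * c0)) := by
    have base := ((hA0.const_mul τ).add (hB0.const_mul τ)).add (hC0.const_mul (τ ^ 3))
    refine base.congr' ?_
    filter_upwards [self_mem_nhdsWithin] with y hy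
    exact (hFeq y hy).symm
  have hF1 : Tendsto F (nhdsWithin 1 (Iio 1)) (nhds (τ * a1 + τ * b1 + τ ^ 3 * c1)) := by
    have base := ((hA1.const_mul τ).add (hB1.const_mul τ)).add (hC1.const_mul (τ ^ 3))
    refine base.congr' ?_
    filter_upwards [Ioo_mem_nhdsLT_of_mem (show (1:ℝ) ∈ Ioc (0:ℝ) 1 by constructor <;> norm_num)]
      with y hy
    exact (hFeq y hy.1).symm
  -- FTC
  have hFTC : ∫ y in (0:ℝ)..1, G y
      = (τ * a1 + τ * b1 + τ ^ 3 * c1) - (τ * a0 + τ * b0 + τ ^ 3 * c0) :=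
    intervalIntegral.integral_eq_sub_of_hasDerivAt_of_tendsto zero_lt_one hderiv hInt hF0 hF1
  have hIoo : ∫ y in Ioo (0:ℝ) 1, G y
      = (τ * a1 + τ * b1 + τ ^ 3 * c1) - (τ * a0 + τ * b0 + τ ^ 3 * c0) := by
    rw [← hFTC, intervalIntegral.integral_of_le zero_le_one,
      ← integral_Ioc_eq_integral_Ioo]
  -- combine
  have h12 : IntegrableOn (fun x => τ * (2 - α) * (x ^ α * (Vx x) ^ 2)
      + τ ^ 3 * (2 - α) * (x ^ (2 - α) * (V x) ^ 2)) (Ioo (0:ℝ) 1) :=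
    (hi1.const_mul _).add (hi2.const_mul _)
  have hsplit : ∫ x in Ioo (0:ℝ) 1, G x
      = (τ * (2 - α) * (∫ x in Ioo (0:ℝ) 1, x ^ α * (Vx x) ^ 2)
        + τ ^ 3 * (2 - α) * (∫ x in Ioo (0:ℝ) 1, x ^ (2 - α) * (V x) ^ 2))
        - ∫ x in Ioo (0:ℝ) 1, L x := by
    rw [hGdef]
    rw [integral_sub h12 hiL,
      integral_add (hi1.const_mul (τ * (2 - α))) (hi2.const_mul (τ ^ 3 * (2 - α))),
      integral_const_mul, integral_const_mul]
  have := hsplit.symm.trans hIoo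
  simp only [hLdef] at this ⊢
  linarith [this]
/-- Lemma 2.3. -/
theorem lemma_2_3
    (α S0 τ : ℝ) (hα : α ∈ Ioo (0:ℝ) 2) (hS0 : 0 < S0) (hτ : 0 < τ)
    (v vx Pv : ℝ → ℝ → ℝ)
    -- x-derivatives of v (s-sections belong to D(P))
    (hvx : ∀ s ∈ Icc (-S0) S0, ∀ x ∈ Ioo (0:ℝ) 1, HasDerivAt (fun y => v s y) (vx s x) x)
    (hPv : ∀ s ∈ Icc (-S0) S0, ∀ x ∈ Ioo (0:ℝ) 1,
      HasDerivAt (fun y => y ^ α * vx s y) (Pv s x) x)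
    -- boundary conditions contained in H¹_α(0,1) and in D(P)
    (hbc1 : ∀ s ∈ Icc (-S0) S0, Tendsto (fun x => v s x) (nhdsWithin 1 (Iio 1)) (nhds 0))
    (hbc0w : ∀ s ∈ Icc (-S0) S0, α < 1 →
      Tendsto (fun x => v s x) (nhdsWithin 0 (Ioi 0)) (nhds 0))
    (hbc0s : ∀ s ∈ Icc (-S0) S0, 1 ≤ α →
      Tendsto (fun x => x ^ α * vx s x) (nhdsWithin 0 (Ioi 0)) (nhds 0))
    -- integrability conditions contained in H¹_α(0,1) and in D(P)
    (hL2 : ∀ s ∈ Icc (-S0) S0, ∫⁻ x in Ioo (0:ℝ) 1, ENNReal.ofReal ((v s x) ^ 2) < ⊤)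
    (hL2x : ∀ s ∈ Icc (-S0) S0, ∫⁻ x in Ioo (0:ℝ) 1, ENNReal.ofReal (x ^ α * (vx s x) ^ 2) < ⊤)
    (hL2P : ∀ s ∈ Icc (-S0) S0, ∫⁻ x in Ioo (0:ℝ) 1, ENNReal.ofReal ((Pv s x) ^ 2) < ⊤)
    -- the boundary limits at x = 0 and x = 1 of the bracket terms
    (A0 A1 Bv0 Bv1 C0 C1 : ℝ → ℝ)
    (hA0 : ∀ s ∈ Ioo (-S0) S0,
      Tendsto (fun x => x ^ (α + 1) * (vx s x) ^ 2) (nhdsWithin 0 (Ioi 0)) (nhds (A0 s)))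
    (hA1 : ∀ s ∈ Ioo (-S0) S0,
      Tendsto (fun x => x ^ (α + 1) * (vx s x) ^ 2) (nhdsWithin 1 (Iio 1)) (nhds (A1 s)))
    (hB0 : ∀ s ∈ Ioo (-S0) S0,
      Tendsto (fun x => x ^ α * v s x * vx s x) (nhdsWithin 0 (Ioi 0)) (nhds (Bv0 s)))
    (hB1 : ∀ s ∈ Ioo (-S0) S0,
      Tendsto (fun x => x ^ α * v s x * vx s x) (nhdsWithin 1 (Iio 1)) (nhds (Bv1 s)))
    (hC0 : ∀ s ∈ Ioo (-S0) S0,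
      Tendsto (fun x => x ^ (3 - α) * (v s x) ^ 2) (nhdsWithin 0 (Ioi 0)) (nhds (C0 s)))
    (hC1 : ∀ s ∈ Ioo (-S0) S0,
      Tendsto (fun x => x ^ (3 - α) * (v s x) ^ 2) (nhdsWithin 1 (Iio 1)) (nhds (C1 s)))
    -- all the occurring integrals are finite
    (hI : IntegrableOn (fun p : ℝ × ℝ =>
      (-(Pv p.1 p.2) - τ ^ 2 * p.2 ^ (2 - α) * v p.1 p.2) *
        (2 * τ * p.2 * vx p.1 p.2 + τ * v p.1 p.2)) (Zset S0))
    (hI1 : IntegrableOn (fun p : ℝ × ℝ => p.2 ^ α * (vx p.1 p.2) ^ 2) (Zset S0))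
    (hI2 : IntegrableOn (fun p : ℝ × ℝ => p.2 ^ (2 - α) * (v p.1 p.2) ^ 2) (Zset S0))
    (hIA : IntegrableOn (fun s => A1 s - A0 s) (Ioo (-S0) S0))
    (hIB : IntegrableOn (fun s => Bv1 s - Bv0 s) (Ioo (-S0) S0))
    (hIC : IntegrableOn (fun s => C1 s - C0 s) (Ioo (-S0) S0)) :
    (∫ p in Zset S0,
        (-(Pv p.1 p.2) - τ ^ 2 * p.2 ^ (2 - α) * v p.1 p.2) *
          (2 * τ * p.2 * vx p.1 p.2 + τ * v p.1 p.2))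
      = τ * (2 - α) * (∫ p in Zset S0, p.2 ^ α * (vx p.1 p.2) ^ 2)
        + τ ^ 3 * (2 - α) * (∫ p in Zset S0, p.2 ^ (2 - α) * (v p.1 p.2) ^ 2)
        + (-(τ * ∫ s in Ioo (-S0) S0, (A1 s - A0 s))
           - τ * (∫ s in Ioo (-S0) S0, (Bv1 s - Bv0 s))
           - τ ^ 3 * ∫ s in Ioo (-S0) S0, (C1 s - C0 s)) := by
  have hsub : Ioo (-S0) S0 ⊆ Icc (-S0) S0 := Ioo_subset_Icc_self
  -- convert product-set integrability to product-measure integrability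
  have convert_int : ∀ f : ℝ × ℝ → ℝ, IntegrableOn f (Zset S0) →
      Integrable f ((volume.restrict (Ioo (-S0) S0)).prod (volume.restrict (Ioo (0:ℝ) 1))) := by
    intro f hf
    rw [Measure.prod_restrict]
    rwa [IntegrableOn, Measure.volume_eq_prod ℝ ℝ] at hf
  -- Fubini on the rectangle
  have fub : ∀ f : ℝ × ℝ → ℝ, IntegrableOn f (Zset S0) →
      ∫ p in Zset S0, f p = ∫ s in Ioo (-S0) S0, ∫ x in Ioo (0:ℝ) 1, f (s, x) := by
    intro f hf
    have hf' : IntegrableOn f (Ioo (-S0) S0 ×ˢ Ioo (0:ℝ) 1)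
        ((volume : Measure ℝ).prod volume) := by
      rw [IntegrableOn, ← Measure.prod_restrict]
      exact convert_int f hf
    have : ∫ p in Ioo (-S0) S0 ×ˢ Ioo (0:ℝ) 1, f p ∂((volume : Measure ℝ).prod volume)
        = ∫ s in Ioo (-S0) S0, ∫ x in Ioo (0:ℝ) 1, f (s, x) := setIntegral_prod f hf'
    rw [← this, ← Measure.volume_eq_prod ℝ ℝ]
    rfl
  -- a.e. slice integrability
  have haeL := (convert_int _ hI).prod_right_ae
  have hae1 := (convert_int _ hI1).prod_right_ae
  have hae2 := (convert_int _ hI2).prod_right_ae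
  -- a.e. slice identity
  have key : ∀ᵐ s ∂(volume.restrict (Ioo (-S0) S0)),
      (∫ x in Ioo (0:ℝ) 1,
        (-(Pv s x) - τ ^ 2 * x ^ (2 - α) * v s x) * (2 * τ * x * vx s x + τ * v s x))
      = (τ * (2 - α) * (∫ x in Ioo (0:ℝ) 1, x ^ α * (vx s x) ^ 2)
        + τ ^ 3 * (2 - α) * (∫ x in Ioo (0:ℝ) 1, x ^ (2 - α) * (v s x) ^ 2))
        - (τ * (A1 s - A0 s) + τ * (Bv1 s - Bv0 s) + τ ^ 3 * (C1 s - C0 s)) := by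
    filter_upwards [haeL, hae1, hae2, ae_restrict_mem measurableSet_Ioo] with s h1 h2 h3 hs
    have hres := slice_lemma α τ hα.1 hα.2 hτ (v s) (vx s) (Pv s)
      (fun x hx => hvx s (hsub hs) x hx) (fun x hx => hPv s (hsub hs) x hx)
      (A0 s) (A1 s) (Bv0 s) (Bv1 s) (C0 s) (C1 s)
      (hA0 s hs) (hA1 s hs) (hB0 s hs) (hB1 s hs) (hC0 s hs) (hC1 s hs)
      h1 h2 h3
    linarith [hres]
  -- integrability of the s-dependent pieces
  have hJ1 : Integrable (fun s => ∫ x in Ioo (0:ℝ) 1, x ^ α * (vx s x) ^ 2)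
      (volume.restrict (Ioo (-S0) S0)) := (convert_int _ hI1).integral_prod_left
  have hJ2 : Integrable (fun s => ∫ x in Ioo (0:ℝ) 1, x ^ (2 - α) * (v s x) ^ 2)
      (volume.restrict (Ioo (-S0) S0)) := (convert_int _ hI2).integral_prod_left
  have hJ12 : Integrable (fun s =>
      τ * (2 - α) * (∫ x in Ioo (0:ℝ) 1, x ^ α * (vx s x) ^ 2)
      + τ ^ 3 * (2 - α) * (∫ x in Ioo (0:ℝ) 1, x ^ (2 - α) * (v s x) ^ 2))
      (volume.restrict (Ioo (-S0) S0)) :=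
    (hJ1.const_mul _).add (hJ2.const_mul _)
  have hbd : Integrable (fun s =>
      τ * (A1 s - A0 s) + τ * (Bv1 s - Bv0 s) + τ ^ 3 * (C1 s - C0 s))
      (volume.restrict (Ioo (-S0) S0)) :=
    ((hIA.const_mul τ).add (hIB.const_mul τ)).add (hIC.const_mul (τ ^ 3))
  have hbd' : Integrable (fun s => τ * (A1 s - A0 s) + τ * (Bv1 s - Bv0 s))
      (volume.restrict (Ioo (-S0) S0)) := (hIA.const_mul τ).add (hIB.const_mul τ)
  rw [fub _ hI, fub _ hI1, fub _ hI2, integral_congr_ae key,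
    integral_sub hJ12 hbd, integral_add (hJ1.const_mul _) (hJ2.const_mul _),
    integral_add hbd' (hIC.const_mul (τ ^ 3)),
    integral_add (hIA.const_mul τ) (hIB.const_mul τ),
    integral_const_mul, integral_const_mul, integral_const_mul, integral_const_mul,
    integral_const_mul]
  ring
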